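/- Let B be the circumscribed bundle of PG(2,q) invariant under a Singer cyclic group S, and let b be an S-orbit of bi-lines of PG(2,q). Then the incidence structure whose points are the q^2+q+1 bi-lines of b and whose lines are the q^2+q+1 conics of B, with a bi-line incident to a conic when its center (the intersection point of its two lines) lies on the conic, is a projective plane of order q. -/
import Mathlib


/-- Evaluation of the ternary quadratic form with coefficient vector
`a = (a11,a22,a33,a12,a13,a23)` at `x = (x1,x2,x3)`. -/
def Qeval {F : Type*} [CommRing F] (a : Fin 6 → F) (x : Fin 3 → F) : F :=
  a 0 * x 0 ^ 2 + a 1 * x 1 ^ 2 + a 2 * x 2 ^ 2 +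
    a 3 * x 0 * x 1 + a 4 * x 0 * x 2 + a 5 * x 1 * x 2

/-- A ternary quadratic form is degenerate if it factors into a product of
two linear forms over the algebraic closure. -/
def IsDegenerateBar (F : Type*) [Field F] (a : Fin 6 → F) : Prop :=
  ∃ u v : Fin 3 → AlgebraicClosure F, ∀ x : Fin 3 → AlgebraicClosure F,
    Qeval (fun i => algebraMap F (AlgebraicClosure F) (a i)) x =
      (∑ i, u i * x i) * (∑ i, v i * x i)

section

variable {F : Type*} [Field F]

/-- Incidence between a line (a point of the dual plane, with coefficient
vector `u`) and a point (with coordinate vector `w`) of PG(2,q). -/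
def IncPL (l p : Projectivization F (Fin 3 → F)) : Prop :=
  ∃ (u : Fin 3 → F) (hu : u ≠ 0) (w : Fin 3 → F) (hw : w ≠ 0),
    l = Projectivization.mk F u hu ∧ p = Projectivization.mk F w hw ∧
      ∑ i, u i * w i = 0

/-- The point `p` of PG(2,q) lies on the quadric `c` (a point of PG(5,q)
regarded as a quadric of PG(2,q)). -/
def VanishC (c : Projectivization F (Fin 6 → F))
    (p : Projectivization F (Fin 3 → F)) : Prop :=
  ∃ (a : Fin 6 → F) (ha : a ≠ 0) (w : Fin 3 → F) (hw : w ≠ 0),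
    c = Projectivization.mk F a ha ∧ p = Projectivization.mk F w hw ∧
      Qeval a w = 0

/-- `c` is a (nondegenerate) conic of PG(2,q). -/
def ConicC (c : Projectivization F (Fin 6 → F)) : Prop :=
  ∃ (a : Fin 6 → F) (ha : a ≠ 0), c = Projectivization.mk F a ha ∧
    ¬ IsDegenerateBar F a

/-- A bi-line `bl` (a pair of distinct lines) is incident with the quadric
`c` when the common point of its lines (its center) lies on `c`. -/
def IncBC (bl : Finset (Projectivization F (Fin 3 → F)))
    (c : Projectivization F (Fin 6 → F)) : Prop :=
  ∃ p : Projectivization F (Fin 3 → F),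
    (∀ l ∈ bl, IncPL l p) ∧ VanishC c p

end


section Helpers
open Matrix
variable {F : Type*} [Field F]

lemma incPL_mk {u w : Fin 3 → F} (hu : u ≠ 0) (hw : w ≠ 0) :
    IncPL (Projectivization.mk F u hu) (Projectivization.mk F w hw) ↔
      ∑ i, u i * w i = 0 := by
  constructor
  · rintro ⟨u₀, hu₀, w₀, hw₀, h1, h2, h3⟩
    rw [Projectivization.mk_eq_mk_iff] at h1 h2
    obtain ⟨a, ha⟩ := h1
    obtain ⟨c, hc⟩ := h2
    subst ha; subst hc
    simp only [Pi.smul_apply, smul_eq_mul, Units.smul_def] at h3 ⊢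
    rw [Fin.sum_univ_three] at h3 ⊢
    have : (a:F) * (c:F) * (u₀ 0 * w₀ 0 + u₀ 1 * w₀ 1 + u₀ 2 * w₀ 2) = 0 := by
      rw [h3]; ring
    calc (a:F) • u₀ 0 * ((c:F) • w₀ 0) + (a:F) • u₀ 1 * ((c:F) • w₀ 1)
          + (a:F) • u₀ 2 * ((c:F) • w₀ 2)
        = (a:F) * (c:F) * (u₀ 0 * w₀ 0 + u₀ 1 * w₀ 1 + u₀ 2 * w₀ 2) := by
          simp only [smul_eq_mul]; ring
      _ = 0 := this
  · intro h
    exact ⟨u, hu, w, hw, rfl, rfl, h⟩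

lemma vanishC_mk {a : Fin 6 → F} {w : Fin 3 → F} (ha : a ≠ 0) (hw : w ≠ 0) :
    VanishC (Projectivization.mk F a ha) (Projectivization.mk F w hw) ↔
      Qeval a w = 0 := by
  constructor
  · rintro ⟨a₀, ha₀, w₀, hw₀, h1, h2, h3⟩
    rw [Projectivization.mk_eq_mk_iff] at h1 h2
    obtain ⟨s, hs⟩ := h1
    obtain ⟨t, ht⟩ := h2
    subst hs; subst ht
    have : (s:F) * (t:F)^2 * Qeval a₀ w₀ = 0 := by rw [h3]; ring
    calc Qeval ((s:F) • a₀) ((t:F) • w₀)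
        = (s:F) * (t:F)^2 * Qeval a₀ w₀ := by
          simp only [Qeval, Pi.smul_apply, smul_eq_mul, Units.smul_def]; ring
      _ = 0 := this
  · intro h
    exact ⟨a, ha, w, hw, rfl, rfl, h⟩

lemma cross_zero_mk {u w : Fin 3 → F} (hu : u ≠ 0) (hw : w ≠ 0)
    (h : crossProduct u w = 0) :
    Projectivization.mk F u hu = Projectivization.mk F w hw := by
  have hni : ¬ LinearIndependent F ![u, w] := by
    intro hli
    exact (crossProduct_ne_zero_iff_linearIndependent.mpr hli) h
  rw [linearIndependent_fin2] at hni
  push_neg at hni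
  simp only [Matrix.cons_val_one, Matrix.head_cons, Matrix.cons_val_zero] at hni
  obtain ⟨t, ht⟩ := hni hw
  exact (Projectivization.mk_eq_mk_iff' F u w hu hw).mpr ⟨t, ht⟩

open Matrix in
lemma cross_cross_eq (a bv c : Fin 3 → F) :
    crossProduct a (crossProduct bv c) =
      (∑ i, a i * c i) • bv - (∑ i, a i * bv i) • c := by
  funext i
  fin_cases i <;>
    simp [cross_apply, Fin.sum_univ_three] <;> ring

open Matrix in
lemma dot_cross_left (v w : Fin 3 → F) : ∑ i, v i * (crossProduct v w) i = 0 := by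
  simp [cross_apply, Fin.sum_univ_three]; ring

open Matrix in
lemma dot_cross_right (v w : Fin 3 → F) : ∑ i, w i * (crossProduct v w) i = 0 := by
  simp [cross_apply, Fin.sum_univ_three]; ring

open Matrix in
lemma line_eq_of_subset {u u' : Fin 3 → F} (hu : u ≠ 0) (hu' : u' ≠ 0)
    (h : ∀ w : Fin 3 → F, w ≠ 0 → (∑ i, u i * w i = 0) → ∑ i, u' i * w i = 0) :
    Projectivization.mk F u hu = Projectivization.mk F u' hu' := by
  have key : ∀ w : Fin 3 → F, (∑ i, u i * w i = 0) → ∑ i, u' i * w i = 0 := by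
    intro w hw0
    by_cases hw : w = 0
    · subst hw; simp
    · exact h w hw hw0
  have hc : crossProduct u u' = 0 := by
    have h0 := key ![0, -u 2, u 1] (by simp [Fin.sum_univ_three]; ring)
    have h1 := key ![u 2, 0, -u 0] (by simp [Fin.sum_univ_three]; ring)
    have h2 := key ![u 1, -u 0, 0] (by simp [Fin.sum_univ_three]; ring)
    simp only [Fin.sum_univ_three, Matrix.cons_val_zero, Matrix.cons_val_one,
      Matrix.head_cons, Matrix.cons_val_two, Matrix.tail_cons] at h0 h1 h2
    funext i
    fin_cases i <;> simp [cross_apply] <;>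
      [(linear_combination h0); (linear_combination h1); (linear_combination -h2)]
  exact cross_zero_mk hu hu' hc

lemma cross_ne_zero {u w : Fin 3 → F} (hu : u ≠ 0) (hw : w ≠ 0)
    (h : Projectivization.mk F u hu ≠ Projectivization.mk F w hw) :
    crossProduct u w ≠ 0 := fun h0 => h (cross_zero_mk hu hw h0)

lemma point_unique {u u' w w' : Fin 3 → F} (hu : u ≠ 0) (hu' : u' ≠ 0)
    (hw : w ≠ 0) (hw' : w' ≠ 0)
    (hne : Projectivization.mk F u hu ≠ Projectivization.mk F u' hu')
    (h1 : ∑ i, u i * w i = 0) (h2 : ∑ i, u' i * w i = 0)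
    (h3 : ∑ i, u i * w' i = 0) (h4 : ∑ i, u' i * w' i = 0) :
    Projectivization.mk F w hw = Projectivization.mk F w' hw' := by
  by_contra hcon
  have hz : crossProduct w w' ≠ 0 := cross_ne_zero hw hw' hcon
  have hu_z : crossProduct u (crossProduct w w') = 0 := by
    rw [cross_cross_eq, h1, h3]; simp
  have hu'_z : crossProduct u' (crossProduct w w') = 0 := by
    rw [cross_cross_eq, h2, h4]; simp
  exact hne ((cross_zero_mk hu hz hu_z).trans (cross_zero_mk hu' hz hu'_z).symm)

lemma natCard_subtype {α : Type*} [Fintype α] (p : α → Prop) [DecidablePred p] :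
    Nat.card {x // p x} = (Finset.univ.filter p).card := by
  rw [Nat.card_eq_fintype_card, Fintype.card_subtype]

end Helpers

/-- Let `S` be a Singer cyclic group of PGL(3,q), generated by the
projectivity `act` on points (matrix `M`, acting regularly), with induced
action `actL` on lines and `actQ` on quadrics.  Let `B` be the circumscribed
bundle invariant under `S`: an `S`-orbit of `q^2+q+1` conics, any two meeting
in exactly one point, with exactly `q+1` conics of `B` through each point.
Let `b` be an `S`-orbit of bi-lines, of size `q^2+q+1`.  Then the incidence
structure with points the bi-lines of `b` and lines the conics of `B`, a
bi-line being incident with a conic when its center lies on the conic, is a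
projective plane of order `q`. -/
theorem bundle_biline_projective_plane (F : Type*) [Field F] [Fintype F]
    [DecidableEq (Projectivization F (Fin 3 → F))]
    (q : ℕ) (hq : Fintype.card F = q)
    (M : GL (Fin 3) F)
    (act actL : Projectivization F (Fin 3 → F) → Projectivization F (Fin 3 → F))
    (actQ : Projectivization F (Fin 6 → F) → Projectivization F (Fin 6 → F))
    (hact : ∀ (v : Fin 3 → F) (hv : v ≠ 0) (hv' : M.val.mulVec v ≠ 0),
      act (Projectivization.mk F v hv) = Projectivization.mk F (M.val.mulVec v) hv')
    (hactL : ∀ (u : Fin 3 → F) (hu : u ≠ 0)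
      (hu' : ((M⁻¹ : GL (Fin 3) F).val.transpose).mulVec u ≠ 0),
      actL (Projectivization.mk F u hu) =
        Projectivization.mk F (((M⁻¹ : GL (Fin 3) F).val.transpose).mulVec u) hu')
    (hcompat : ∀ l p, IncPL (actL l) (act p) ↔ IncPL l p)
    (hactQ : ∀ c p, VanishC (actQ c) (act p) ↔ VanishC c p)
    (hreg : ∀ p p' : Projectivization F (Fin 3 → F),
      ∃! k : ℕ, k < q ^ 2 + q + 1 ∧ act^[k] p = p')
    (B : Finset (Projectivization F (Fin 6 → F)))
    (hBcard : B.card = q ^ 2 + q + 1)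
    (hBconic : ∀ c ∈ B, ConicC c)
    (hBmeet : ∀ c₁ ∈ B, ∀ c₂ ∈ B, c₁ ≠ c₂ →
      ∃! p : Projectivization F (Fin 3 → F), VanishC c₁ p ∧ VanishC c₂ p)
    (hBpt : ∀ p : Projectivization F (Fin 3 → F),
      Nat.card {c : Projectivization F (Fin 6 → F) // c ∈ B ∧ VanishC c p} = q + 1)
    (hBinv : ∀ c ∈ B, actQ c ∈ B)
    (hBtrans : ∀ c₁ ∈ B, ∀ c₂ ∈ B, ∃ k : ℕ, actQ^[k] c₁ = c₂)
    (b : Finset (Finset (Projectivization F (Fin 3 → F))))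
    (hbcard : b.card = q ^ 2 + q + 1)
    (hbl : ∀ bl ∈ b, bl.card = 2)
    (hbinv : ∀ bl ∈ b, bl.image actL ∈ b)
    (hbtrans : ∀ bl₁ ∈ b, ∀ bl₂ ∈ b, ∃ k : ℕ, bl₁.image (actL^[k]) = bl₂) :
    (∀ bl ∈ b,
      Nat.card {c : Projectivization F (Fin 6 → F) // c ∈ B ∧ IncBC bl c} = q + 1) ∧
    (∀ c ∈ B,
      Nat.card {bl : Finset (Projectivization F (Fin 3 → F)) // bl ∈ b ∧ IncBC bl c}
        = q + 1) ∧
    (∀ bl₁ ∈ b, ∀ bl₂ ∈ b, bl₁ ≠ bl₂ →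
      ∃! c : Projectivization F (Fin 6 → F), c ∈ B ∧ IncBC bl₁ c ∧ IncBC bl₂ c) ∧
    (∀ c₁ ∈ B, ∀ c₂ ∈ B, c₁ ≠ c₂ →
      ∃! bl : Finset (Projectivization F (Fin 3 → F)),
        bl ∈ b ∧ IncBC bl c₁ ∧ IncBC bl c₂) := by
  classical
  set N := q ^ 2 + q + 1 with hN
  have hq2 : 2 ≤ q := hq ▸ Fintype.one_lt_card
  have hNpos : 0 < N := by positivity
  -- every point is mk of a nonzero vector
  have hrep : ∀ p : Projectivization F (Fin 3 → F),
      ∃ (v : Fin 3 → F) (hv : v ≠ 0), p = Projectivization.mk F v hv :=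
    fun p => ⟨p.rep, p.rep_nonzero, (p.mk_rep).symm⟩
  have hrep6 : ∀ c : Projectivization F (Fin 6 → F),
      ∃ (a : Fin 6 → F) (ha : a ≠ 0), c = Projectivization.mk F a ha :=
    fun c => ⟨c.rep, c.rep_nonzero, (c.mk_rep).symm⟩
  -- M preserves nonzeroness
  have hMinv : (M⁻¹ : GL (Fin 3) F).val * M.val = 1 := M.inv_mul
  have hMcancel : ∀ v w : Fin 3 → F, M.val.mulVec v = M.val.mulVec w → v = w := by
    intro v w h
    have h2 : ((M⁻¹ : GL (Fin 3) F).val * M.val).mulVec v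
        = ((M⁻¹ : GL (Fin 3) F).val * M.val).mulVec w := by
      rw [← Matrix.mulVec_mulVec, ← Matrix.mulVec_mulVec, h]
    rwa [hMinv, Matrix.one_mulVec, Matrix.one_mulVec] at h2
  have hMv : ∀ v : Fin 3 → F, v ≠ 0 → M.val.mulVec v ≠ 0 := by
    intro v hv h0
    exact hv (hMcancel v 0 (by simpa [Matrix.mulVec_zero] using h0))
  -- act is injective, surjective
  have hactInj : Function.Injective act := by
    intro p p' h
    obtain ⟨v, hv, rfl⟩ := hrep p
    obtain ⟨v', hv', rfl⟩ := hrep p'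
    rw [hact v hv (hMv v hv), hact v' hv' (hMv v' hv')] at h
    rw [Projectivization.mk_eq_mk_iff] at h
    obtain ⟨a, ha⟩ := h
    have : M.val.mulVec ((a : F) • v') = M.val.mulVec v := by
      rw [Matrix.mulVec_smul]; exact_mod_cast ha
    rw [Projectivization.mk_eq_mk_iff']
    exact ⟨a, hMcancel _ _ this⟩
  have hfinP : Finite (Projectivization F (Fin 3 → F)) := Quotient.finite _
  have hfinQ : Finite (Projectivization F (Fin 6 → F)) := Quotient.finite _
  have instP : Fintype (Projectivization F (Fin 3 → F)) := Fintype.ofFinite _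
  have instQ : Fintype (Projectivization F (Fin 6 → F)) := Fintype.ofFinite _
  have hactBij : Function.Bijective act :=
    ⟨hactInj, Finite.surjective_of_injective hactInj⟩
  -- iterated compatibility
  have hcompat_iter : ∀ (k : ℕ) l p, IncPL (actL^[k] l) (act^[k] p) ↔ IncPL l p := by
    intro k
    induction k with
    | zero => intro l p; simp
    | succ n ih =>
      intro l p
      rw [Function.iterate_succ_apply', Function.iterate_succ_apply', hcompat]
      exact ih l p
  have hactQ_iter : ∀ (k : ℕ) c p, VanishC (actQ^[k] c) (act^[k] p) ↔ VanishC c p := by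
    intro k
    induction k with
    | zero => intro c p; simp
    | succ n ih =>
      intro c p
      rw [Function.iterate_succ_apply', Function.iterate_succ_apply', hactQ]
      exact ih c p
  -- a power of act with a fixed point is the identity
  have hfix : ∀ (k : ℕ) (p : Projectivization F (Fin 3 → F)), act^[k] p = p →
      ∀ p', act^[k] p' = p' := by
    intro k p hk p'
    obtain ⟨j, ⟨_, hj⟩, _⟩ := hreg p p'
    calc act^[k] p' = act^[k] (act^[j] p) := by rw [hj]
      _ = act^[j] (act^[k] p) := by
          rw [← Function.iterate_add_apply, Nat.add_comm, Function.iterate_add_apply]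
      _ = p' := by rw [hk, hj]
  -- the number of points is N
  have hcardP : Nat.card (Projectivization F (Fin 3 → F)) = N := by
    have h10 : (![1, 0, 0] : Fin 3 → F) ≠ 0 := by
      intro h; have := congrFun h 0; simp at this
    set p₀ : Projectivization F (Fin 3 → F) := Projectivization.mk F ![1,0,0] h10
    have hinj : ∀ i j : ℕ, i < N → j < N → act^[i] p₀ = act^[j] p₀ → i = j := by
      have key : ∀ i j : ℕ, i ≤ j → j < N → act^[i] p₀ = act^[j] p₀ → i = j := by
        intro i j hij hjN h
        have h2 : act^[j - i + i] p₀ = act^[i] p₀ := by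
          rw [Nat.sub_add_cancel hij, ← h]
        rw [Function.iterate_add_apply] at h2
        obtain ⟨k₀, hk₀, huk⟩ := hreg (act^[i] p₀) (act^[i] p₀)
        have e1 : j - i = k₀ := huk _ ⟨by omega, h2⟩
        have e2 : 0 = k₀ := huk 0 ⟨hNpos, rfl⟩
        omega
      intro i j hi hj h
      rcases le_total i j with hle | hle
      · exact key i j hle hj h
      · exact (key j i hle hi h.symm).symm
    have hbij : Function.Bijective (fun k : Fin N => act^[(k : ℕ)] p₀) := by
      constructor
      · intro i j h
        exact Fin.ext (hinj i j i.isLt j.isLt h)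
      · intro p'
        obtain ⟨k, ⟨hkN, hk⟩, _⟩ := hreg p₀ p'
        exact ⟨⟨k, hkN⟩, hk⟩
    rw [Nat.card_eq_of_equiv_fin (Equiv.ofBijective _ hbij).symm, ]
  -- the unique center of each bi-line
  have hcenter : ∀ x : {x // x ∈ b}, ∃! p : Projectivization F (Fin 3 → F),
      ∀ l ∈ x.1, IncPL l p := by
    rintro ⟨bl, hblb⟩
    obtain ⟨l₁, l₂, hnel, rfl⟩ := Finset.card_eq_two.mp (hbl bl hblb)
    obtain ⟨u, hu, rfl⟩ := hrep l₁
    obtain ⟨u', hu', rfl⟩ := hrep l₂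
    have hz : crossProduct u u' ≠ 0 := cross_ne_zero hu hu' hnel
    refine ⟨Projectivization.mk F (crossProduct u u') hz, ?_, ?_⟩
    · intro l hl
      rcases Finset.mem_insert.mp hl with h | h
      · subst h; exact (incPL_mk hu hz).mpr (dot_cross_left u u')
      · rw [Finset.mem_singleton] at h; subst h
        exact (incPL_mk hu' hz).mpr (dot_cross_right u u')
    · intro p hp
      obtain ⟨w, hw, rfl⟩ := hrep p
      have i1 : ∑ i, u i * w i = 0 :=
        (incPL_mk hu hw).mp (hp _ (Finset.mem_insert_self _ _))
      have i2 : ∑ i, u' i * w i = 0 :=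
        (incPL_mk hu' hw).mp (hp _ (Finset.mem_insert_of_mem (Finset.mem_singleton_self _)))
      exact point_unique hu hu' hw hz hnel i1 i2 (dot_cross_left u u') (dot_cross_right u u')
  choose center hcen huniq using hcenter
  -- incidence via the center
  have hIncIff : ∀ (x : {x // x ∈ b}) (c : Projectivization F (Fin 6 → F)),
      IncBC x.1 c ↔ VanishC c (center x) := by
    intro x c
    constructor
    · rintro ⟨p, hp, hv⟩
      rwa [huniq x p hp] at hv
    · intro h
      exact ⟨center x, hcen x, h⟩
  -- iterated images of bi-lines
  have himg : ∀ (k : ℕ) (s : Finset (Projectivization F (Fin 3 → F))),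
      s.image (actL^[k + 1]) = (s.image (actL^[k])).image actL := by
    intro k s
    rw [Finset.image_image]
    apply Finset.image_congr
    intro l _
    exact Function.iterate_succ_apply' actL k l
  have hbinv_iter : ∀ (k : ℕ), ∀ bl ∈ b, bl.image (actL^[k]) ∈ b := by
    intro k
    induction k with
    | zero => intro bl h; simpa using h
    | succ n ih => intro bl h; rw [himg]; exact hbinv _ (ih bl h)
  -- equivariance of the center
  have hstep : ∀ x : {x // x ∈ b},
      center ⟨x.1.image actL, hbinv _ x.2⟩ = act (center x) := by
    intro x
    refine (huniq ⟨x.1.image actL, hbinv _ x.2⟩ _ ?_).symm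
    intro l hl
    obtain ⟨l₀, hl₀, rfl⟩ := Finset.mem_image.mp hl
    exact (hcompat l₀ (center x)).mpr (hcen x l₀ hl₀)
  have hcen_iter : ∀ (k : ℕ) (x : {x // x ∈ b}),
      center ⟨x.1.image (actL^[k]), hbinv_iter k x.1 x.2⟩ = act^[k] (center x) := by
    intro k
    induction k with
    | zero =>
      intro x
      have : (⟨x.1.image (actL^[0]), hbinv_iter 0 x.1 x.2⟩ : {x // x ∈ b}) = x := by
        apply Subtype.ext; simp
      rw [this]; simp
    | succ n ih =>
      intro x
      have heq : (⟨x.1.image (actL^[n + 1]), hbinv_iter (n + 1) x.1 x.2⟩ : {x // x ∈ b})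
          = ⟨(x.1.image (actL^[n])).image actL,
              hbinv _ (hbinv_iter n x.1 x.2)⟩ := by
        apply Subtype.ext; exact himg n x.1
      rw [heq, hstep ⟨x.1.image (actL^[n]), hbinv_iter n x.1 x.2⟩, ih x,
        Function.iterate_succ_apply']
  -- the center map is a bijection
  have hcenInj : Function.Injective center := by
    intro x y hxy
    obtain ⟨k, hk⟩ := hbtrans x.1 x.2 y.1 y.2
    have hy : y = ⟨x.1.image (actL^[k]), hbinv_iter k x.1 x.2⟩ := Subtype.ext hk.symm
    have hcy : act^[k] (center x) = center x := by
      rw [← hcen_iter k x, ← hy, ← hxy]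
    have hfixall := hfix k (center x) hcy
    have hLfix : ∀ l, actL^[k] l = l := by
      intro l
      obtain ⟨u, hu, hlu⟩ := hrep l
      obtain ⟨u', hu', hlu'⟩ := hrep (actL^[k] l)
      have hsub : ∀ w : Fin 3 → F, w ≠ 0 →
          (∑ i, u' i * w i = 0) → ∑ i, u i * w i = 0 := by
        intro w hw hsum
        have h1 : IncPL (actL^[k] l) (Projectivization.mk F w hw) := by
          rw [hlu']; exact (incPL_mk hu' hw).mpr hsum
        have h2 : IncPL l (Projectivization.mk F w hw) := by
          have h3 := hcompat_iter k l (Projectivization.mk F w hw)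
          rw [hfixall (Projectivization.mk F w hw)] at h3
          exact h3.mp h1
        rw [hlu] at h2
        exact (incPL_mk hu hw).mp h2
      have hres := line_eq_of_subset hu' hu hsub
      rw [hlu', hlu]
      exact hres
    apply Subtype.ext
    rw [hy]
    simp only
    rw [show x.1.image (actL^[k]) = x.1.image id from Finset.image_congr (fun l _ => hLfix l)]
    simp
  have hcenBij : Function.Bijective center := by
    refine (Fintype.bijective_iff_injective_and_card center).mpr ⟨hcenInj, ?_⟩
    rw [Fintype.card_coe, hbcard, ← hcardP, Nat.card_eq_fintype_card]
  -- number of points on a conic of B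
  have hn_act : ∀ c, Nat.card {p // VanishC (actQ c) p}
      = Nat.card {p // VanishC c p} := by
    intro c
    exact (Nat.card_congr ((Equiv.ofBijective act hactBij).subtypeEquiv
      (fun p => (hactQ c p).symm))).symm
  have hn_iter : ∀ (k : ℕ) c, Nat.card {p // VanishC (actQ^[k] c) p}
      = Nat.card {p // VanishC c p} := by
    intro k
    induction k with
    | zero => intro c; rfl
    | succ n ih => intro c; rw [Function.iterate_succ_apply', hn_act, ih]
  have hn_const : ∀ c₁ ∈ B, ∀ c₂ ∈ B,
      Nat.card {p // VanishC c₂ p} = Nat.card {p // VanishC c₁ p} := by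
    intro c₁ h₁ c₂ h₂
    obtain ⟨k, hk⟩ := hBtrans c₁ h₁ c₂ h₂
    rw [← hk, hn_iter]
  have hBfilter : ∀ p : Projectivization F (Fin 3 → F),
      (B.filter (fun c => VanishC c p)).card = q + 1 := by
    intro p
    have h := hBpt p
    rw [natCard_subtype] at h
    rw [← h]
    congr 1
    ext c
    simp [Finset.mem_filter]
  have hsum : ∀ c ∈ B, Nat.card {p // VanishC c p} = q + 1 := by
    have htot : ∑ c ∈ B, (Finset.univ.filter (fun p => VanishC c p)).card
        = N * (q + 1) := by
      calc ∑ c ∈ B, (Finset.univ.filter (fun p => VanishC c p)).card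
          = ∑ p : Projectivization F (Fin 3 → F),
              (B.filter (fun c => VanishC c p)).card := by
            simp_rw [Finset.card_filter]
            exact Finset.sum_comm
        _ = ∑ _p : Projectivization F (Fin 3 → F), (q + 1) :=
            Finset.sum_congr rfl (fun p _ => hBfilter p)
        _ = Fintype.card (Projectivization F (Fin 3 → F)) * (q + 1) := by
            rw [Finset.sum_const, Finset.card_univ, smul_eq_mul]
        _ = N * (q + 1) := by rw [← Nat.card_eq_fintype_card, hcardP]
    intro c hc
    have hconst' : ∀ c' ∈ B, (Finset.univ.filter (fun p => VanishC c' p)).card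
        = Nat.card {p // VanishC c p} := by
      intro c' hc'
      rw [← natCard_subtype]
      exact hn_const c hc c' hc'
    have hconst : ∑ c' ∈ B, (Finset.univ.filter (fun p => VanishC c' p)).card
        = N * Nat.card {p // VanishC c p} := by
      rw [Finset.sum_congr rfl hconst', Finset.sum_const, smul_eq_mul, hBcard]
    exact Nat.eq_of_mul_eq_mul_left hNpos (hconst.symm.trans htot)
  -- goal 1
  have goal1 : ∀ bl ∈ b,
      Nat.card {c // c ∈ B ∧ IncBC bl c} = q + 1 := by
    intro bl hblb
    rw [← hBpt (center ⟨bl, hblb⟩)]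
    exact Nat.card_congr (Equiv.subtypeEquivRight
      (fun c => and_congr_right (fun _ => hIncIff ⟨bl, hblb⟩ c)))
  -- goal 2
  have goal2 : ∀ c ∈ B,
      Nat.card {bl // bl ∈ b ∧ IncBC bl c} = q + 1 := by
    intro c hc
    rw [← hsum c hc]
    exact Nat.card_congr
      ((Equiv.subtypeSubtypeEquivSubtypeInter (· ∈ b) (IncBC · c)).symm.trans
        ((Equiv.ofBijective center hcenBij).subtypeEquiv (fun x => hIncIff x c)))
  -- goal 3
  have goal3 : ∀ bl₁ ∈ b, ∀ bl₂ ∈ b, bl₁ ≠ bl₂ →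
      ∃! c, c ∈ B ∧ IncBC bl₁ c ∧ IncBC bl₂ c := by
    intro bl₁ h₁ bl₂ h₂ hne
    have hpne : center ⟨bl₁, h₁⟩ ≠ center ⟨bl₂, h₂⟩ := by
      intro h
      exact hne (congrArg Subtype.val (hcenInj h))
    set p₁ := center ⟨bl₁, h₁⟩ with hp₁
    set p₂ := center ⟨bl₂, h₂⟩ with hp₂
    have hex : ∃ c ∈ B, VanishC c p₁ ∧ VanishC c p₂ := by
      set C₁ := B.filter (fun c => VanishC c p₁) with hC₁
      have hC₁card : C₁.card = q + 1 := hBfilter p₁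
      set D := fun c : Projectivization F (Fin 6 → F) =>
        (Finset.univ.filter (fun p => VanishC c p)).erase p₁ with hD
      have hDcard : ∀ c ∈ C₁, (D c).card = q := by
        intro c hc
        obtain ⟨hcB, hcV⟩ := Finset.mem_filter.mp hc
        have hmem : p₁ ∈ Finset.univ.filter (fun p => VanishC c p) := by
          simp [Finset.mem_filter, hcV]
        have hfc : (Finset.univ.filter (fun p => VanishC c p)).card = q + 1 := by
          rw [← natCard_subtype]; exact hsum c hcB
        rw [hD]
        simp only
        rw [Finset.card_erase_of_mem hmem, hfc]
        rfl
      have hdisj : ∀ c ∈ C₁, ∀ c' ∈ C₁, c ≠ c' → Disjoint (D c) (D c') := by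
        intro c hc c' hc' hcc
        obtain ⟨hcB, hcV⟩ := Finset.mem_filter.mp hc
        obtain ⟨hc'B, hc'V⟩ := Finset.mem_filter.mp hc'
        rw [Finset.disjoint_left]
        intro p hp hp'
        obtain ⟨hpne1, hpV⟩ := Finset.mem_erase.mp hp
        obtain ⟨_, hpV'⟩ := Finset.mem_erase.mp hp'
        rw [Finset.mem_filter] at hpV hpV'
        obtain ⟨pp, _, hup⟩ := hBmeet c hcB c' hc'B hcc
        exact hpne1 ((hup p ⟨hpV.2, hpV'.2⟩).trans (hup p₁ ⟨hcV, hc'V⟩).symm)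
      set U := C₁.biUnion D with hU
      have hUcard : U.card = (q + 1) * q := by
        rw [hU, Finset.card_biUnion hdisj,
          Finset.sum_congr rfl hDcard, Finset.sum_const, smul_eq_mul, hC₁card]
      have hp₁U : p₁ ∉ U := by
        rw [hU]
        intro h
        obtain ⟨c, _, hc⟩ := Finset.mem_biUnion.mp h
        exact (Finset.mem_erase.mp hc).1 rfl
      have huniv : insert p₁ U = Finset.univ := by
        apply Finset.eq_univ_of_card
        rw [Finset.card_insert_of_notMem hp₁U, hUcard,
          ← Nat.card_eq_fintype_card, hcardP]
        ring
      have hp₂mem : p₂ ∈ insert p₁ U := by rw [huniv]; exact Finset.mem_univ _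
      rcases Finset.mem_insert.mp hp₂mem with h | h
      · exact absurd h.symm hpne
      · obtain ⟨c, hcC₁, hcD⟩ := Finset.mem_biUnion.mp h
        obtain ⟨hcB, hcV⟩ := Finset.mem_filter.mp hcC₁
        obtain ⟨_, hpV⟩ := Finset.mem_erase.mp hcD
        exact ⟨c, hcB, hcV, (Finset.mem_filter.mp hpV).2⟩
    obtain ⟨c, hcB, hv1, hv2⟩ := hex
    refine ⟨c, ⟨hcB, (hIncIff ⟨bl₁, h₁⟩ c).mpr hv1, (hIncIff ⟨bl₂, h₂⟩ c).mpr hv2⟩, ?_⟩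
    rintro c' ⟨hc'B, hI1, hI2⟩
    by_contra hcc
    obtain ⟨pp, _, hup⟩ := hBmeet c' hc'B c hcB hcc
    have e1 := hup p₁ ⟨(hIncIff ⟨bl₁, h₁⟩ c').mp hI1, hv1⟩
    have e2 := hup p₂ ⟨(hIncIff ⟨bl₂, h₂⟩ c').mp hI2, hv2⟩
    exact hpne (e1.trans e2.symm)
  -- goal 4
  have goal4 : ∀ c₁ ∈ B, ∀ c₂ ∈ B, c₁ ≠ c₂ →
      ∃! bl, bl ∈ b ∧ IncBC bl c₁ ∧ IncBC bl c₂ := by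
    intro c₁ h₁ c₂ h₂ hne
    obtain ⟨p, ⟨hv1, hv2⟩, hup⟩ := hBmeet c₁ h₁ c₂ h₂ hne
    obtain ⟨x, hx⟩ := hcenBij.surjective p
    refine ⟨x.1, ⟨x.2, (hIncIff x c₁).mpr (by rw [hx]; exact hv1),
      (hIncIff x c₂).mpr (by rw [hx]; exact hv2)⟩, ?_⟩
    rintro bl' ⟨hb', hI1, hI2⟩
    have hcp : center ⟨bl', hb'⟩ = p :=
      hup _ ⟨(hIncIff ⟨bl', hb'⟩ c₁).mp hI1, (hIncIff ⟨bl', hb'⟩ c₂).mp hI2⟩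
    have := hcenInj (hcp.trans hx.symm)
    exact congrArg Subtype.val this
  exact ⟨goal1, goal2, goal3, goal4⟩
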